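/- Let d ≥ 2 and let A be a d×(d+1) matrix over a commutative ring, with columns indexed 1,…,d+1. For 1 ≤ j ≤ d+1, let A⟨ĵ⟩ denote the d×d matrix obtained from A by deleting column j, and for 1 ≤ j < k ≤ d+1, let B⟨ĵ,k̂⟩ denote the (d−1)×(d−1) matrix obtained from A by deleting row 1 and columns j and k. Then the following three-term Desnanot–Jacobi (Plücker) identity holds: det A⟨1̂⟩ · det B⟨2̂, (d+1)^⟩ + det A⟨(d+1)^⟩ · det B⟨1̂, 2̂⟩ = det A⟨2̂⟩ · det B⟨1̂, (d+1)^⟩. -/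

import Mathlib

open Matrix

private lemma det_updateColumn_sum_fun {n : Type*} [DecidableEq n] [Fintype n] {R : Type*}
    [CommRing R] (M : Matrix n n R) (j : n) {ι : Type*} [DecidableEq ι] (s : Finset ι)
    (f : ι → n → R) :
    (M.updateCol j (∑ i ∈ s, f i)).det = ∑ i ∈ s, (M.updateCol j (f i)).det := by
  induction s using Finset.induction_on with
  | empty =>
      rw [Finset.sum_empty, Finset.sum_empty]
      exact det_eq_zero_of_column_eq_zero j (fun i => by simp [Matrix.updateCol_self])
  | @insert b t hb ih =>
      rw [Finset.sum_insert hb, Finset.sum_insert hb, Matrix.det_updateCol_add, ih]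

/-- The cofactor syzygy: `∑ j, (-1)^j · det A⟨ĵ⟩ · A i j = 0`. -/
private lemma cofactor_syzygy {m : ℕ} {R : Type*} [CommRing R]
    (A : Matrix (Fin (m + 2)) (Fin (m + 3)) R) (i : Fin (m + 2)) :
    ∑ j : Fin (m + 3), (-1 : R) ^ (j : ℕ) * (A.submatrix id j.succAbove).det * A i j = 0 := by
  set M : Matrix (Fin (m + 3)) (Fin (m + 3)) R := Matrix.of (Fin.cons (A i) (fun r => A r)) with hM
  have hdup : M.det = 0 := by
    refine Matrix.det_zero_of_row_eq (i := (0 : Fin (m + 3))) (j := i.succ)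
      (Fin.succ_ne_zero i).symm ?_
    funext c
    simp [hM]
  have hexp := Matrix.det_succ_row_zero M
  rw [hdup] at hexp
  calc ∑ j : Fin (m + 3), (-1 : R) ^ (j : ℕ) * (A.submatrix id j.succAbove).det * A i j
      = ∑ j : Fin (m + 3), (-1 : R) ^ (j : ℕ) * M 0 j
          * (M.submatrix Fin.succ j.succAbove).det := by
        refine Finset.sum_congr rfl fun j _ => ?_
        have h1 : M.submatrix Fin.succ j.succAbove = A.submatrix id j.succAbove := by
          ext r c; simp [hM]
        have h2 : M 0 j = A i j := by simp [hM]
        rw [h1, h2]; ring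
    _ = 0 := hexp.symm

theorem desnanot_jacobi_rectangular {m : ℕ} {R : Type*} [CommRing R]
    (A : Matrix (Fin (m + 2)) (Fin (m + 3)) R) :
    (A.submatrix id Fin.succ).det *
        (A.submatrix Fin.succ
          (fun c : Fin (m + 1) =>
            Fin.cases (0 : Fin (m + 3)) (fun i : Fin m => i.succ.succ.castSucc) c)).det
      + (A.submatrix id Fin.castSucc).det *
        (A.submatrix Fin.succ (fun c : Fin (m + 1) => c.succ.succ)).det
      = (A.submatrix id (Fin.succAbove 1)).det *
        (A.submatrix Fin.succ (fun c : Fin (m + 1) => c.succ.castSucc)).det := by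
  classical
  set D : Fin (m + 3) → R := fun j => (A.submatrix id j.succAbove).det with hD
  set a : Fin (m + 3) → Fin (m + 1) → R := fun j r => A r.succ j with ha
  set Base : Matrix (Fin (m + 1)) (Fin (m + 1)) R :=
    A.submatrix Fin.succ
      (fun c : Fin (m + 1) =>
        Fin.cases (0 : Fin (m + 3)) (fun i : Fin m => i.succ.succ.castSucc) c) with hBase
  -- the multilinear expansion of the determinant applied to the zero syzygy vector
  have hmain : ∑ j : Fin (m + 3),
      (-1 : R) ^ (j : ℕ) * D j * (Base.updateCol 0 (a j)).det = 0 := by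
    have h2 : (∑ j : Fin (m + 3), ((-1 : R) ^ (j : ℕ) * D j) • a j)
        = (0 : Fin (m + 1) → R) := by
      funext r
      have := cofactor_syzygy A r.succ
      simpa [ha, hD, Finset.sum_apply, mul_assoc] using this
    have h1 : (Base.updateCol 0
        (∑ j : Fin (m + 3), ((-1 : R) ^ (j : ℕ) * D j) • a j)).det = 0 := by
      rw [h2]
      exact det_eq_zero_of_column_eq_zero 0 (fun i => by simp [Matrix.updateCol_self])
    rw [det_updateColumn_sum_fun] at h1
    calc ∑ j : Fin (m + 3), (-1 : R) ^ (j : ℕ) * D j * (Base.updateCol 0 (a j)).det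
        = ∑ j : Fin (m + 3),
            (Base.updateCol 0 (((-1 : R) ^ (j : ℕ) * D j) • a j)).det := by
          refine Finset.sum_congr rfl fun j _ => ?_
          rw [Matrix.det_updateCol_smul]
      _ = 0 := h1
  -- `j = 0`
  have hG0 : (Base.updateCol 0 (a 0)).det = Base.det := by
    have hcol : a 0 = fun r => Base r 0 := by
      funext r; simp [ha, hBase]
    rw [hcol, Matrix.updateCol_eq_self]
  -- `j = 1`
  have hG1 : (Base.updateCol 0 (a 1)).det
      = (A.submatrix Fin.succ (fun c : Fin (m + 1) => c.succ.castSucc)).det := by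
    congr 1
    ext r c
    refine Fin.cases ?_ (fun i => ?_) c
    · rw [Matrix.updateCol_self]
      have h01 : ((0 : Fin (m + 1)).succ.castSucc) = (1 : Fin (m + 3)) := by
        apply Fin.ext; simp
      simp [ha, h01]
    · rw [Matrix.updateCol_ne (Fin.succ_ne_zero i)]
      simp [hBase]
  -- middle columns give zero
  have hGmid : ∀ i0 : Fin m, (Base.updateCol 0 (a (i0.succ.succ.castSucc))).det = 0 := by
    intro i0
    refine Matrix.det_zero_of_column_eq (i := (0 : Fin (m + 1))) (j := i0.succ)
      (Fin.succ_ne_zero i0).symm ?_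
    intro k
    rw [Matrix.updateCol_self, Matrix.updateCol_ne (Fin.succ_ne_zero i0)]
    simp [ha, hBase]
  -- `j = last`
  have hGlast : (Base.updateCol 0 (a (Fin.last (m + 2)))).det
      = (-1 : R) ^ m * (A.submatrix Fin.succ (fun c : Fin (m + 1) => c.succ.succ)).det := by
    have hperm : Base.updateCol 0 (a (Fin.last (m + 2)))
        = (A.submatrix Fin.succ (fun c : Fin (m + 1) => c.succ.succ)).submatrix id
            ⇑(finRotate (m + 1))⁻¹ := by
      ext r c
      refine Fin.cases ?_ (fun i => ?_) c
      · rw [Matrix.updateCol_self]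
        have h0 : (finRotate (m + 1))⁻¹ (0 : Fin (m + 1)) = Fin.last m := by
          rw [Equiv.Perm.inv_eq_iff_eq, finRotate_succ_apply, Fin.last_add_one]
        have hlast : ((Fin.last m).succ.succ : Fin (m + 3)) = Fin.last (m + 2) := by
          apply Fin.ext; simp
        simp only [ha, Matrix.submatrix_apply, id, h0, hlast]
      · rw [Matrix.updateCol_ne (Fin.succ_ne_zero i)]
        have hi : (finRotate (m + 1))⁻¹ i.succ = i.castSucc := by
          rw [Equiv.Perm.inv_eq_iff_eq, finRotate_succ_apply, Fin.coeSucc_eq_succ]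
        have hidx : ((i.castSucc).succ.succ : Fin (m + 3)) = i.succ.succ.castSucc := by
          apply Fin.ext; simp
        simp only [hBase, Matrix.submatrix_apply, id, hi, hidx, Fin.cases_succ]
    rw [hperm, Matrix.det_permute']
    simp [sign_finRotate]
  -- assemble
  have e1 : ∀ i : Fin m, (((i.castSucc).succ).succ : Fin (m + 3)) = i.succ.succ.castSucc := by
    intro i; apply Fin.ext; simp
  have e2 : (((Fin.last m).succ).succ : Fin (m + 3)) = Fin.last (m + 2) := by
    apply Fin.ext; simp
  rw [Fin.sum_univ_succ, Fin.sum_univ_succ, Fin.sum_univ_castSucc] at hmain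
  simp only [e1, e2, hGmid, mul_zero, Finset.sum_const_zero, add_zero, Fin.val_zero, pow_zero,
    one_mul, Fin.succ_zero_eq_one, Fin.val_one, pow_one, Fin.val_last] at hmain
  rw [hG0, hG1, hGlast] at hmain
  have hA0 : D 0 = (A.submatrix id Fin.succ).det := by
    rw [hD]; simp only []; rw [Fin.succAbove_zero]
  have hA1 : D 1 = (A.submatrix id (Fin.succAbove 1)).det := by rw [hD]
  have hAl : D (Fin.last (m + 2)) = (A.submatrix id Fin.castSucc).det := by
    rw [hD]; simp only []; rw [Fin.succAbove_last]
  rw [hA0, hA1, hAl] at hmain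
  have hpow : ((-1 : R)) ^ (m + 2) * (-1) ^ m = 1 := by
    rw [← pow_add]
    exact Even.neg_one_pow ⟨m + 1, by ring⟩
  linear_combination hmain - ((A.submatrix id Fin.castSucc).det *
    (A.submatrix Fin.succ (fun c : Fin (m + 1) => c.succ.succ)).det) * hpow
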